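/- Suppose Y = (Y_1,...,Y_n) is a binary rearrangement of the i.u.d. sequence X, with n ≥ 3, such that for some k ∈ {3,...,n} the initial rank R_k is independent of the random vector (Y_1,...,Y_{k-1}). Then R_k almost surely takes only its extreme values 1 and k: P(1 < R_k < k) = 0. -/

import Mathlib

open MeasureTheory

/-- `X = (X_1,...,X_n)` is i.u.d. -/
def IsIUD {Ω : Type} [MeasurableSpace Ω] (P : Measure Ω) {n : ℕ}
    (X : Ω → Fin n → ℝ) : Prop :=
  (∀ i, Measurable fun ω => X ω i) ∧
  ProbabilityTheory.iIndepFun (fun i ω => X ω i) P ∧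
  ∀ i, P.map (fun ω => X ω i) = volume.restrict (Set.Icc (0:ℝ) 1)

/-- The ascending arrangement of a tuple. -/
noncomputable def ascArr (n : ℕ) (a : Fin n → ℝ) : Fin n → ℝ := a ∘ Tuple.sort a

/-- The descending arrangement of a tuple. -/
noncomputable def descArr (n : ℕ) (a : Fin n → ℝ) : Fin n → ℝ := fun i => ascArr n a i.rev

/-- The initial rank (0-indexed: `irank y k` is the paper's `R_{k+1}`). -/
noncomputable def irank {n : ℕ} (y : Fin n → ℝ) (k : Fin n) : ℕ :=
  1 + (Finset.univ.filter (fun i : Fin n => i < k ∧ y k < y i)).card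

open scoped ENNReal

/-- Cover of `[0,1]` by `N` subintervals of length `1/N`. -/
lemma cover_Icc_aux (N : ℕ) (hN : 0 < N) :
    Set.Icc (0:ℝ) 1 ⊆ ⋃ i ∈ Finset.range N, Set.Icc ((i:ℝ)/N) ((i+1)/N) := by
  intro x hx
  have hN' : (0:ℝ) < N := by exact_mod_cast hN
  set i := min (⌊x * N⌋₊) (N-1) with hi
  have hxN : 0 ≤ x * N := mul_nonneg hx.1 hN'.le
  have hiN : i < N := lt_of_le_of_lt (min_le_right _ _) (by omega)
  refine Set.mem_biUnion (Finset.mem_range.2 hiN) ?_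
  constructor
  · rw [div_le_iff₀ hN']
    calc (i:ℝ) ≤ ⌊x*N⌋₊ := by exact_mod_cast min_le_left _ _
    _ ≤ x * N := Nat.floor_le hxN
  · rw [le_div_iff₀ hN']
    by_cases hcase : ⌊x*N⌋₊ ≤ N-1
    · have hieq : i = ⌊x*N⌋₊ := min_eq_left hcase
      have hlt := Nat.lt_floor_add_one (x*N)
      rw [hieq]
      push_cast
      linarith
    · have hieq : i = N-1 := min_eq_right (le_of_not_ge hcase)
      have h1 : x * N ≤ N := by nlinarith [hx.2]
      have h2 : ((i:ℝ) + 1) = N := by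
        rw [hieq]; push_cast [Nat.cast_sub (by omega : 1 ≤ N)]; ring
      rw [h2]; exact h1

/-- If `g` enumerates the coordinates of `a` in increasing `f∘a`-order, and exactly the
coordinates `< k` have small `f`-value, then the first `k` positions map to coordinates `< k`. -/
lemma low_coords_aux {n : ℕ} (a : Fin n → ℝ) (g : Fin n → Fin n) (hg : Function.Injective g)
    (f : ℝ → ℝ) (k : Fin n)
    (hmono : ∀ i j : Fin n, i < j → f (a (g i)) < f (a (g j)))
    (hlow : ∀ i, i < k → f (a i) ≤ 1/2)
    (hhigh : ∀ i, ¬ i < k → 1/2 < f (a i)) :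
    ∀ l, l < k → g l < k := by
  intro l hl
  by_contra hgl
  have hstep : ∀ l', l ≤ l' → ¬ g l' < k := by
    intro l' hll' hk'
    have h1 : 1/2 < f (a (g l)) := hhigh _ hgl
    have h2 : f (a (g l)) ≤ f (a (g l')) := by
      rcases eq_or_lt_of_le hll' with h | h
      · rw [h]
      · exact (hmono _ _ h).le
    have := hlow _ hk'
    linarith
  have hmaps : ∀ l' ∈ Finset.Ici l, g l' ∈ Finset.univ.filter (fun i : Fin n => ¬ i < k) := by
    intro l' hl'
    simp only [Finset.mem_filter, Finset.mem_univ, true_and]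
    exact hstep l' (Finset.mem_Ici.mp hl')
  have hcard := Finset.card_le_card_of_injOn g hmaps (hg.injOn)
  rw [Fin.card_Ici] at hcard
  have hc1 : (Finset.univ.filter (fun i : Fin n => i < k)).card = k.1 := by
    have : Finset.univ.filter (fun i : Fin n => i < k) = Finset.Iio k := by
      ext m; simp
    rw [this, Fin.card_Iio]
  have hc2 : (Finset.univ.filter (fun i : Fin n => ¬ i < k)).card = n - k.1 := by
    have := Finset.card_filter_add_card_filter_not
      (s := (Finset.univ : Finset (Fin n))) (p := fun i : Fin n => i < k)
    rw [hc1, Finset.card_univ, Fintype.card_fin] at this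
    omega
  rw [hc2] at hcard
  have hlk : l.1 < k.1 := hl
  have hkn : k.1 < n := k.2
  omega

/-- Suppose `Y` is a binary rearrangement of the i.u.d. sequence `X` directed by `f`,
with `n ≥ 3`, such that for some `k ∈ {3,...,n}` (0-indexed: `2 ≤ k`) the initial rank
`R_k` is independent of `(Y_1,...,Y_{k-1})`.  Then `R_k` almost surely takes only its
extreme values `1` and `k`: `P(1 < R_k < k) = 0`. -/
theorem binary_rearrangement_rank_extreme {n : ℕ} (hn : 3 ≤ n)
    {Ω : Type} [MeasurableSpace Ω] (P : Measure Ω) [IsProbabilityMeasure P]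
    (X : Ω → Fin n → ℝ) (hX : IsIUD P X)
    (f : ℝ → ℝ) (hfmeas : Measurable f)
    (hfrange : ∀ u ∈ Set.Icc (0:ℝ) 1, f u ∈ Set.Icc (0:ℝ) 1)
    (hfpres : Measure.map f (volume.restrict (Set.Icc (0:ℝ) 1))
      = volume.restrict (Set.Icc (0:ℝ) 1))
    (hfns : ∀ t : ℝ, volume {u : ℝ | u ∈ Set.Icc (0:ℝ) 1 ∧ f u = t} = 0)
    (μ : Ω → Equiv.Perm (Fin n))
    (hμmeas : ∀ s : Equiv.Perm (Fin n), MeasurableSet {ω | μ ω = s})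
    (hμ : ∀ᵐ ω ∂P, ∀ i j : Fin n, i < j →
      f (descArr n (X ω) (μ ω i)) < f (descArr n (X ω) (μ ω j)))
    (Y : Ω → Fin n → ℝ) (hY : Y = fun ω i => descArr n (X ω) (μ ω i))
    (k : Fin n) (hk : 2 ≤ k.1)
    (hind : ProbabilityTheory.IndepFun
      (fun ω => irank (Y ω) k)
      (fun ω (i : {i : Fin n // i < k}) => Y ω i.1) P) :
    P {ω | 1 < irank (Y ω) k ∧ irank (Y ω) k < k.1 + 1} = 0 := by
  classical
  obtain ⟨hXm, hXind, hXdist⟩ := hX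
  have hkn : k.1 < n := k.2
  set kk := k.1 with hkk
  set ν : Measure ℝ := volume.restrict (Set.Icc (0:ℝ) 1) with hνdef
  set q : ℝ≥0∞ := P {ω | 1 < irank (Y ω) k ∧ irank (Y ω) k < kk + 1} with hqdef
  -- basic facts about ν
  have hν_apply : ∀ {t : Set ℝ}, MeasurableSet t → ∀ i : Fin n,
      P ((fun ω => X ω i) ⁻¹' t) = ν t := by
    intro t ht i
    rw [← hXdist i, Measure.map_apply (hXm i) ht]
  set s : Set ℝ := f ⁻¹' Set.Iic (1/2 : ℝ) with hsdef
  have hsm : MeasurableSet s := hfmeas measurableSet_Iic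
  have hνuniv : ν Set.univ = 1 := by
    rw [hνdef, Measure.restrict_apply_univ, Real.volume_Icc]
    norm_num
  have hνs : ν s = 2⁻¹ := by
    have h1 : Measure.map f ν (Set.Iic (1/2:ℝ)) = ν s :=
      Measure.map_apply hfmeas measurableSet_Iic
    rw [hfpres] at h1
    rw [← h1, hνdef, Measure.restrict_apply measurableSet_Iic]
    have h2 : Set.Iic (1/2:ℝ) ∩ Set.Icc 0 1 = Set.Icc (0:ℝ) (1/2) := by
      ext x
      simp only [Set.mem_inter_iff, Set.mem_Iic, Set.mem_Icc]
      constructor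
      · rintro ⟨h, h0, h1⟩; exact ⟨h0, h⟩
      · rintro ⟨h0, h⟩; exact ⟨h, h0, by linarith⟩
    rw [h2, Real.volume_Icc]
    rw [show (1/2 - 0 : ℝ) = 2⁻¹ by norm_num, ENNReal.ofReal_inv_of_pos two_pos]
    norm_num
  have hνsc : ν sᶜ = 2⁻¹ := by
    rw [measure_compl hsm (by rw [hνs]; exact ENNReal.inv_ne_top.2 two_ne_zero), hνuniv, hνs]
    rw [ENNReal.one_sub_inv_two]
  -- the coordinate permutation of Y
  have hYeq : ∀ ω (l : Fin n), Y ω l = X ω (Tuple.sort (X ω) ((μ ω l).rev)) := by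
    intro ω l
    rw [hY]
    simp [descArr, ascArr, Function.comp]
  -- main bound
  have key : ∀ N : ℕ, 0 < N →
      q.toReal ≤ (n.choose (kk+1) : ℝ) * 4^n * (1/(N:ℝ)) := by
    intro N hN
    have hN0 : (N:ℝ≥0∞) ≠ 0 := Nat.cast_ne_zero.2 hN.ne'
    have hNtop : (N:ℝ≥0∞) ≠ ∞ := ENNReal.natCast_ne_top N
    -- pigeonhole: a good interval J
    obtain ⟨i, hiN, him⟩ : ∃ i : ℕ, i ∈ Finset.range N ∧
        ((4:ℝ≥0∞)*N)⁻¹ ≤ ν (s ∩ Set.Icc ((i:ℝ)/N) ((i+1)/N)) := by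
      by_contra hcon
      push_neg at hcon
      set U : Set ℝ := ⋃ j ∈ Finset.range N, Set.Icc ((j:ℝ)/N) ((j+1)/N) with hU
      have hUm : MeasurableSet U :=
        Finset.measurableSet_biUnion _ (fun j _ => measurableSet_Icc)
      have h0 : ν Uᶜ = 0 := by
        rw [hνdef, Measure.restrict_apply hUm.compl]
        have he : Uᶜ ∩ Set.Icc (0:ℝ) 1 = ∅ := by
          rw [Set.eq_empty_iff_forall_notMem]
          rintro x ⟨hxc, hx⟩
          exact hxc (cover_Icc_aux N hN hx)
        rw [he, measure_empty]
      have hsum : ν s ≤ ∑ j ∈ Finset.range N, ν (s ∩ Set.Icc ((j:ℝ)/N) ((j+1)/N)) := by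
        calc ν s ≤ ν (s ∩ U) + ν (s \ U) := measure_le_inter_add_diff _ _ _
        _ ≤ ν (s ∩ U) + ν Uᶜ :=
            add_le_add le_rfl (measure_mono (Set.diff_subset_compl s U))
        _ = ν (s ∩ U) := by rw [h0, add_zero]
        _ = ν (⋃ j ∈ Finset.range N, s ∩ Set.Icc ((j:ℝ)/N) ((j+1)/N)) := by
            rw [hU, Set.inter_iUnion₂]
        _ ≤ ∑ j ∈ Finset.range N, ν (s ∩ Set.Icc ((j:ℝ)/N) ((j+1)/N)) :=
            measure_biUnion_finset_le _ _
      have hle : ∑ j ∈ Finset.range N, ν (s ∩ Set.Icc ((j:ℝ)/N) ((j+1)/N))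
          ≤ N * ((4:ℝ≥0∞) * N)⁻¹ := by
        calc ∑ j ∈ Finset.range N, ν (s ∩ Set.Icc ((j:ℝ)/N) ((j+1)/N))
            ≤ ∑ _j ∈ Finset.range N, ((4:ℝ≥0∞) * N)⁻¹ :=
              Finset.sum_le_sum (fun j hj => (hcon j hj).le)
        _ = N * ((4:ℝ≥0∞) * N)⁻¹ := by
            rw [Finset.sum_const, Finset.card_range, nsmul_eq_mul]
      have h4 : (N:ℝ≥0∞) * ((4:ℝ≥0∞) * N)⁻¹ = 4⁻¹ := by
        rw [ENNReal.mul_inv (Or.inl (by norm_num)) (Or.inl (by norm_num))]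
        rw [mul_comm ((4:ℝ≥0∞))⁻¹ _, ← mul_assoc, ENNReal.mul_inv_cancel hN0 hNtop, one_mul]
      have hcontr : (2:ℝ≥0∞)⁻¹ ≤ 4⁻¹ := by
        rw [← hνs, ← h4]
        exact hsum.trans hle
      have : ¬ ((2:ℝ≥0∞)⁻¹ ≤ 4⁻¹) := by
        rw [not_le]
        exact ENNReal.inv_lt_inv.mpr (by norm_num)
      exact this hcontr
    set J : Set ℝ := Set.Icc ((i:ℝ)/N) ((i+1)/N) with hJdef
    have hJm : MeasurableSet J := measurableSet_Icc
    have hνJ : ν J ≤ (N:ℝ≥0∞)⁻¹ := by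
      have h1 : ν J ≤ volume J := by
        rw [hνdef, Measure.restrict_apply hJm]
        exact measure_mono Set.inter_subset_left
      refine h1.trans ?_
      rw [Real.volume_Icc]
      have h2 : ((i:ℝ)+1)/N - i/N = (N:ℝ)⁻¹ := by
        field_simp
        ring
      rw [h2, ENNReal.ofReal_inv_of_pos (by exact_mod_cast hN), ENNReal.ofReal_natCast]
    -- the a.s. event G
    set G : Set Ω := {ω | ∀ i j : Fin n, i < j →
      f (descArr n (X ω) (μ ω i)) < f (descArr n (X ω) (μ ω j))} with hGdef
    have hGc : P Gᶜ = 0 := by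
      have := hμ
      rw [MeasureTheory.ae_iff] at this
      exact this
    -- the conditioning event C
    set Cs : Set ({i : Fin n // i < k} → ℝ) := Set.univ.pi (fun _ => J) with hCsdef
    have hCsm : MeasurableSet Cs := MeasurableSet.univ_pi fun _ => hJm
    set C : Set Ω := (fun ω (i : {i : Fin n // i < k}) => Y ω i.1) ⁻¹' Cs with hCdef
    have hCmem : ∀ ω, ω ∈ C ↔ ∀ l : Fin n, l < k → Y ω l ∈ J := by
      intro ω
      constructor
      · intro h l hl; exact h ⟨l, hl⟩ (Set.mem_univ _)
      · intro h l _; exact h l.1 l.2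
    -- the event E
    set t : Fin n → Set ℝ := fun l => if l < k then s ∩ J else sᶜ with htdef
    have htm : ∀ l, MeasurableSet (t l) := by
      intro l
      by_cases h : l < k <;> simp only [htdef, h, if_true, if_false]
      · exact hsm.inter hJm
      · exact hsm.compl
    set E : Set Ω := ⋂ l ∈ (Finset.univ : Finset (Fin n)), (fun ω => X ω l) ⁻¹' (t l)
      with hEdef
    have hcard1 : (Finset.univ.filter (fun l : Fin n => l < k)).card = kk := by
      have h : Finset.univ.filter (fun l : Fin n => l < k) = Finset.Iio k := by
        ext m; simp
      rw [h, Fin.card_Iio]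
    have hcard2 : (Finset.univ.filter (fun l : Fin n => ¬ l < k)).card = n - kk := by
      have h := Finset.card_filter_add_card_filter_not
        (s := (Finset.univ : Finset (Fin n))) (p := fun l : Fin n => l < k)
      rw [hcard1, Finset.card_univ, Fintype.card_fin] at h
      omega
    have hPE : P E = (ν (s ∩ J))^kk * 2⁻¹^(n-kk) := by
      rw [hEdef, hXind.measure_inter_preimage_eq_mul Finset.univ (fun l _ => htm l)]
      have h1 : ∀ l ∈ (Finset.univ : Finset (Fin n)),
          P ((fun ω => X ω l) ⁻¹' t l) = if l < k then ν (s ∩ J) else ν sᶜ := by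
        intro l _
        rw [hν_apply (htm l) l, htdef]
        by_cases h : l < k <;> simp [h]
      rw [Finset.prod_congr rfl h1, Finset.prod_ite, Finset.prod_const, Finset.prod_const,
        hcard1, hcard2, hνsc]
    -- E ∩ G ⊆ C
    have hEC : E ∩ G ⊆ C := by
      rintro ω ⟨hEω, hGω⟩
      have hEω' : ∀ l : Fin n, X ω l ∈ t l := by
        intro l
        have h := hEω
        simp only [hEdef, Set.mem_iInter, Set.mem_preimage] at h
        exact h l (Finset.mem_univ l)
      set g : Fin n → Fin n := fun l => Tuple.sort (X ω) ((μ ω l).rev) with hg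
      have hginj : Function.Injective g := by
        intro a b hab
        exact (μ ω).injective (Fin.rev_injective ((Tuple.sort (X ω)).injective hab))
      have hmono : ∀ a b : Fin n, a < b → f (X ω (g a)) < f (X ω (g b)) := by
        intro a b hab
        exact hGω a b hab
      have hlow : ∀ l : Fin n, l < k → f (X ω l) ≤ 1/2 := by
        intro l hl
        have h := hEω' l
        simp only [htdef, if_pos hl] at h
        exact h.1
      have hhigh : ∀ l : Fin n, ¬ l < k → 1/2 < f (X ω l) := by
        intro l hl
        have h := hEω' l
        simp only [htdef, if_neg hl] at h
        exact not_le.mp h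
      have hlowc := low_coords_aux (X ω) g hginj f k hmono hlow hhigh
      refine (hCmem ω).mpr ?_
      intro l hl
      rw [hYeq ω l]
      have h := hEω' (g l)
      simp only [htdef, if_pos (hlowc l hl)] at h
      exact h.2
    -- lower bound for P C
    have hPC : (ν (s ∩ J))^kk * 2⁻¹^(n-kk) ≤ P C := by
      rw [← hPE]
      calc P E ≤ P (E ∩ C) + P (E \ C) := measure_le_inter_add_diff _ _ _
      _ ≤ P C + P Gᶜ := by
          refine add_le_add (measure_mono Set.inter_subset_right) (measure_mono ?_)
          intro ω hω
          simp only [Set.mem_compl_iff]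
          intro hG
          exact hω.2 (hEC ⟨hω.1, hG⟩)
      _ = P C := by rw [hGc, add_zero]
    -- the union bound event
    set R : Ω → ℕ := fun ω => irank (Y ω) k with hRdef
    set B : Set ℕ := {m : ℕ | 1 < m ∧ m < kk + 1} with hBdef
    have hBC : R ⁻¹' B ∩ C ⊆
        ⋃ T ∈ Finset.powersetCard (kk+1) (Finset.univ : Finset (Fin n)),
          ⋂ l ∈ T, (fun ω => X ω l) ⁻¹' J := by
      rintro ω ⟨hR, hC⟩
      have hCJ : ∀ l : Fin n, l < k → Y ω l ∈ J := (hCmem ω).1 hC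
      have hR' : 1 < irank (Y ω) k ∧ irank (Y ω) k < kk + 1 := hR
      obtain ⟨hR1, hR2⟩ := hR'
      set F := Finset.univ.filter (fun m : Fin n => m < k ∧ Y ω k < Y ω m) with hF
      have hirank : irank (Y ω) k = 1 + F.card := rfl
      have hcardF1 : 0 < F.card := by omega
      have hcardF2 : F.card < kk := by omega
      obtain ⟨j, hjF⟩ := Finset.card_pos.mp hcardF1
      rw [hF, Finset.mem_filter] at hjF
      obtain ⟨-, hjk, hjY⟩ := hjF
      have hex : ∃ i0 : Fin n, i0 < k ∧ ¬ (Y ω k < Y ω i0) := by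
        by_contra hcc
        push_neg at hcc
        have hsub : Finset.univ.filter (fun m : Fin n => m < k) ⊆ F := by
          intro m hm
          rw [Finset.mem_filter] at hm
          rw [hF, Finset.mem_filter]
          exact ⟨hm.1, hm.2, hcc m hm.2⟩
        have hcs := Finset.card_le_card hsub
        rw [hcard1] at hcs
        omega
      obtain ⟨i0, hi0k, hi0⟩ := hex
      have hYk : Y ω k ∈ J := by
        rw [hJdef]
        constructor
        · exact le_trans (hCJ i0 hi0k).1 (not_lt.mp hi0)
        · exact le_trans (le_of_lt hjY) (hCJ j hjk).2
      set g : Fin n → Fin n := fun l => Tuple.sort (X ω) ((μ ω l).rev) with hg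
      have hginj : Function.Injective g := by
        intro a b hab
        exact (μ ω).injective (Fin.rev_injective ((Tuple.sort (X ω)).injective hab))
      refine Set.mem_iUnion₂.mpr ⟨(Finset.Iic k).image g, ?_, ?_⟩
      · rw [Finset.mem_powersetCard]
        refine ⟨Finset.subset_univ _, ?_⟩
        rw [Finset.card_image_of_injective _ hginj, Fin.card_Iic]
      · refine Set.mem_iInter₂.mpr ?_
        intro l hl
        rw [Finset.mem_image] at hl
        obtain ⟨l', hl', rfl⟩ := hl
        rw [Finset.mem_Iic] at hl'
        simp only [Set.mem_preimage]
        rw [← hYeq ω l']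
        rcases lt_or_eq_of_le hl' with h | h
        · exact hCJ l' h
        · rw [h]; exact hYk
    have hPRBC : P (R ⁻¹' B ∩ C) ≤ (n.choose (kk+1) : ℝ≥0∞) * ((N:ℝ≥0∞)⁻¹)^(kk+1) := by
      refine (measure_mono hBC).trans ((measure_biUnion_finset_le _ _).trans ?_)
      have hT : ∀ T ∈ Finset.powersetCard (kk+1) (Finset.univ : Finset (Fin n)),
          P (⋂ l ∈ T, (fun ω => X ω l) ⁻¹' J) ≤ ((N:ℝ≥0∞)⁻¹)^(kk+1) := by
        intro T hT
        rw [Finset.mem_powersetCard] at hT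
        rw [hXind.measure_inter_preimage_eq_mul T (sets := fun _ => J) (fun l _ => hJm)]
        calc ∏ l ∈ T, P ((fun ω => X ω l) ⁻¹' J)
            = ∏ l ∈ T, ν J := Finset.prod_congr rfl (fun l _ => hν_apply hJm l)
        _ = ν J ^ T.card := by rw [Finset.prod_const]
        _ ≤ ((N:ℝ≥0∞)⁻¹)^(kk+1) := by rw [hT.2]; exact pow_le_pow_left' hνJ _
      refine (Finset.sum_le_sum hT).trans ?_
      rw [Finset.sum_const, Finset.card_powersetCard, Finset.card_univ, Fintype.card_fin,
        nsmul_eq_mul]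
    -- independence
    have hqC : q * P C = P (R ⁻¹' B ∩ C) := by
      have h := hind.measure_inter_preimage_eq_mul B Cs
        MeasurableSpace.measurableSet_top hCsm
      have hqB : q = P (R ⁻¹' B) := rfl
      rw [hqB, hCdef]
      exact h.symm
    -- combine
    have hmain : q * ((((4:ℝ≥0∞)*N)⁻¹)^kk * 2⁻¹^(n-kk))
        ≤ (n.choose (kk+1) : ℝ≥0∞) * ((N:ℝ≥0∞)⁻¹)^(kk+1) := by
      calc q * ((((4:ℝ≥0∞)*N)⁻¹)^kk * 2⁻¹^(n-kk))
          ≤ q * ((ν (s ∩ J))^kk * 2⁻¹^(n-kk)) := by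
            gcongr
      _ ≤ q * P C := by gcongr
      _ = P (R ⁻¹' B ∩ C) := hqC
      _ ≤ _ := hPRBC
    -- arithmetic
    have hq1 : q ≠ ∞ := measure_ne_top P _
    have hNR : (0:ℝ) < N := by exact_mod_cast hN
    have hNne : (N:ℝ) ≠ 0 := hNR.ne'
    have hhm : q.toReal * (((4*(N:ℝ))⁻¹)^kk * ((2:ℝ)⁻¹)^(n-kk))
        ≤ (n.choose (kk+1) : ℝ) * ((N:ℝ)⁻¹)^(kk+1) := by
      have hfinR : (n.choose (kk+1) : ℝ≥0∞) * ((N:ℝ≥0∞)⁻¹)^(kk+1) ≠ ∞ :=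
        ENNReal.mul_ne_top (ENNReal.natCast_ne_top _)
          (ENNReal.pow_ne_top (ENNReal.inv_ne_top.2 hN0))
      have h2 := ENNReal.toReal_mono hfinR hmain
      simp only [ENNReal.toReal_mul, ENNReal.toReal_pow, ENNReal.toReal_inv,
        ENNReal.toReal_ofNat, ENNReal.toReal_natCast] at h2
      exact h2
    have hpos : (0:ℝ) < ((4*(N:ℝ))⁻¹)^kk * ((2:ℝ)⁻¹)^(n-kk) := by positivity
    rw [← mul_le_mul_iff_of_pos_right hpos]
    refine hhm.trans ?_
    calc (n.choose (kk+1) : ℝ) * ((N:ℝ)⁻¹)^(kk+1)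
        = ((n.choose (kk+1) : ℝ) * (4^kk * 2^(n-kk)) * (1/(N:ℝ)))
            * (((4*(N:ℝ))⁻¹)^kk * ((2:ℝ)⁻¹)^(n-kk)) := by
          have h4 : (4:ℝ)^kk * ((4*(N:ℝ))⁻¹)^kk = ((N:ℝ)⁻¹)^kk := by
            rw [← mul_pow, mul_inv, ← mul_assoc, mul_inv_cancel₀ (by norm_num), one_mul]
          have h2 : (2:ℝ)^(n-kk) * ((2:ℝ)⁻¹)^(n-kk) = 1 := by
            rw [← mul_pow, mul_inv_cancel₀ two_ne_zero, one_pow]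
          linear_combination (-((n.choose (kk+1) : ℝ) * (1/(N:ℝ)) * ((4:ℝ)^kk * ((4*(N:ℝ))⁻¹)^kk))) * h2
            + (-((n.choose (kk+1) : ℝ) * (1/(N:ℝ)))) * h4
    _ ≤ ((n.choose (kk+1) : ℝ) * 4^n * (1/(N:ℝ)))
            * (((4*(N:ℝ))⁻¹)^kk * ((2:ℝ)⁻¹)^(n-kk)) := by
          gcongr
          calc (4:ℝ)^kk * 2^(n-kk) ≤ 4^kk * 4^(n-kk) := by
                gcongr <;> norm_num
          _ = 4^n := by
                rw [← pow_add]
                congr 1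
                omega
  -- conclude q = 0
  have hq1 : q ≠ ∞ := measure_ne_top P _
  have hqR : q.toReal ≤ 0 := by
    have htends : Filter.Tendsto
        (fun N : ℕ => ((n.choose (kk+1) : ℝ) * 4^n) * (1/(N:ℝ))) Filter.atTop (nhds 0) := by
      have := tendsto_one_div_atTop_nhds_zero_nat (𝕜 := ℝ)
      simpa using this.const_mul ((n.choose (kk+1) : ℝ) * 4^n)
    refine ge_of_tendsto htends ?_
    filter_upwards [Filter.eventually_gt_atTop 0] with N hN
    exact key N hN
  have : q.toReal = 0 := le_antisymm hqR ENNReal.toReal_nonneg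
  rcases (ENNReal.toReal_eq_zero_iff q).1 this with h | h
  · exact h
  · exact absurd h hq1
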